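/- For every real p > 0 and natural number N >= 1: sum_{n=1}^N n^{2p} / (sum_{m=1}^n m^p) <= ((p+1)/p) * (N+1)^p. -/

import Mathlib

open Finset

/-- For `q ≥ 1` and `m ≥ 1`: `m^q ≤ (m-1)^q + q * m^(q-1)`. -/
lemma rpow_sub_le (q : ℝ) (hq : 1 ≤ q) (m : ℕ) (hm : 1 ≤ m) :
    (m : ℝ) ^ q ≤ ((m - 1 : ℕ) : ℝ) ^ q + q * (m : ℝ) ^ (q - 1) := by
  have hm0 : (0 : ℝ) < (m : ℝ) := by exact_mod_cast hm
  have hs : (-1 : ℝ) ≤ -1 / m := by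
    rw [neg_div]
    simp only [neg_le_neg_iff]
    rw [div_le_one hm0]
    exact_mod_cast hm
  have hber := one_add_mul_self_le_rpow_one_add hs hq
  have h1 : (0:ℝ) ≤ 1 + (-1/m) := by linarith
  have hmul := mul_le_mul_of_nonneg_right hber (Real.rpow_nonneg hm0.le q)
  have hprod : (1 + (-1/m)) ^ q * (m:ℝ) ^ q = ((m - 1 : ℕ) : ℝ) ^ q := by
    rw [← Real.mul_rpow h1 hm0.le]
    congr 1
    push_cast [Nat.cast_sub hm]
    field_simp
    ring
  have hpow : (m:ℝ) ^ q = (m:ℝ) ^ (q-1) * m := by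
    rw [Real.rpow_sub_one hm0.ne', div_mul_cancel₀]
    exact hm0.ne'
  rw [hprod] at hmul
  have : (1 + q * (-1/m)) * (m:ℝ)^q = (m:ℝ)^q - q * (m:ℝ)^(q-1) := by
    rw [hpow]; field_simp; ring
  rw [this] at hmul
  linarith

/-- For `q ≥ 1` and `n ≥ 1`: `n^q + q * n^(q-1) ≤ (n+1)^q`. -/
lemma rpow_add_le (q : ℝ) (hq : 1 ≤ q) (n : ℕ) (hn : 1 ≤ n) :
    (n : ℝ) ^ q + q * (n : ℝ) ^ (q - 1) ≤ ((n : ℝ) + 1) ^ q := by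
  have hn0 : (0 : ℝ) < (n : ℝ) := by exact_mod_cast hn
  have hs : (-1 : ℝ) ≤ 1 / n := by
    have : (0:ℝ) ≤ 1/n := by positivity
    linarith
  have hber := one_add_mul_self_le_rpow_one_add hs hq
  have h1 : (0:ℝ) ≤ 1 + 1/n := by positivity
  have hmul := mul_le_mul_of_nonneg_right hber (Real.rpow_nonneg hn0.le q)
  have hprod : (1 + 1/n) ^ q * (n:ℝ) ^ q = ((n:ℝ) + 1) ^ q := by
    rw [← Real.mul_rpow h1 hn0.le]
    congr 1
    field_simp
  have hpow : (n:ℝ) ^ q = (n:ℝ) ^ (q-1) * n := by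
    rw [Real.rpow_sub_one hn0.ne', div_mul_cancel₀]
    exact hn0.ne'
  rw [hprod] at hmul
  have : (1 + q * (1/n)) * (n:ℝ)^q = (n:ℝ)^q + q * (n:ℝ)^(q-1) := by
    rw [hpow]; field_simp
  rw [this] at hmul
  exact hmul

/-- For `0 < p ≤ 1` and `n ≥ 1`: `(n-1)^p + p * n^(p-1) ≤ n^p`. -/
lemma mul_rpow_le_sub (p : ℝ) (hp : 0 < p) (hp1 : p ≤ 1) (n : ℕ) (hn : 1 ≤ n) :
    ((n - 1 : ℕ) : ℝ) ^ p + p * (n : ℝ) ^ (p - 1) ≤ (n : ℝ) ^ p := by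
  have hn0 : (0 : ℝ) < (n : ℝ) := by exact_mod_cast hn
  have hs : (-1 : ℝ) ≤ -1 / n := by
    rw [neg_div]
    simp only [neg_le_neg_iff]
    rw [div_le_one hn0]
    exact_mod_cast hn
  have hber := rpow_one_add_le_one_add_mul_self hs hp.le hp1
  have h1 : (0:ℝ) ≤ 1 + (-1/n) := by linarith
  have hmul := mul_le_mul_of_nonneg_right hber (Real.rpow_nonneg hn0.le p)
  have hprod : (1 + (-1/n)) ^ p * (n:ℝ) ^ p = ((n - 1 : ℕ) : ℝ) ^ p := by
    rw [← Real.mul_rpow h1 hn0.le]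
    congr 1
    push_cast [Nat.cast_sub hn]
    field_simp
    ring
  have hpow : (n:ℝ) ^ p = (n:ℝ) ^ (p-1) * n := by
    rw [Real.rpow_sub_one hn0.ne', div_mul_cancel₀]
    exact hn0.ne'
  rw [hprod] at hmul
  have : (1 + p * (-1/n)) * (n:ℝ)^p = (n:ℝ)^p - p * (n:ℝ)^(p-1) := by
    rw [hpow]; field_simp; ring
  rw [this] at hmul
  linarith

/-- Lower bound `n^(p+1)/(p+1) ≤ ∑_{m=1}^n m^p`. -/
lemma sum_rpow_ge (p : ℝ) (hp : 0 < p) (n : ℕ) :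
    (n : ℝ) ^ (p + 1) / (p + 1) ≤ ∑ m ∈ Icc 1 n, (m : ℝ) ^ p := by
  have hp1 : (0:ℝ) < p + 1 := by linarith
  rw [div_le_iff₀ hp1]
  have htel : ∑ i ∈ range n, (((i+1 : ℕ):ℝ) ^ (p+1) - ((i : ℕ):ℝ) ^ (p+1))
      = (n:ℝ) ^ (p+1) - ((0:ℕ):ℝ) ^ (p+1) :=
    Finset.sum_range_sub (fun k => ((k : ℕ):ℝ) ^ (p+1)) n
  have h0 : ((0:ℕ):ℝ) ^ (p+1) = 0 := by
    simp [Real.zero_rpow hp1.ne']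
  rw [h0, sub_zero] at htel
  calc (n:ℝ) ^ (p+1)
      = ∑ i ∈ range n, (((i+1 : ℕ):ℝ) ^ (p+1) - ((i : ℕ):ℝ) ^ (p+1)) := htel.symm
    _ ≤ ∑ i ∈ range n, (p+1) * ((i+1 : ℕ):ℝ) ^ p := by
        apply Finset.sum_le_sum
        intro i _
        have := rpow_sub_le (p+1) (by linarith) (i+1) (Nat.le_add_left 1 i)
        simp only [Nat.add_sub_cancel] at this
        have hpe : p + 1 - 1 = p := by ring
        rw [hpe] at this
        linarith
    _ = (∑ m ∈ Icc 1 n, (m : ℝ) ^ p) * (p+1) := by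
        rw [← Finset.Ico_add_one_right_eq_Icc, Finset.sum_Ico_eq_sum_range, Finset.sum_mul]
        simp only [Nat.add_sub_cancel]
        apply Finset.sum_congr rfl
        intro i _
        rw [add_comm 1 i]
        ring

theorem sum_ratio_rpow_bound (p : ℝ) (hp : 0 < p) (N : ℕ) (hN : 1 ≤ N) :
    ∑ n ∈ Icc 1 N, (n : ℝ) ^ (2 * p) / (∑ m ∈ Icc 1 n, (m : ℝ) ^ p) ≤
      ((p + 1) / p) * ((N : ℝ) + 1) ^ p := by
  have hp1 : (0:ℝ) < p + 1 := by linarith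
  -- Step 1: each term is ≤ (p+1) * n^(p-1)
  have hterm : ∀ n ∈ Icc 1 N, (n : ℝ) ^ (2 * p) / (∑ m ∈ Icc 1 n, (m : ℝ) ^ p)
      ≤ (p + 1) * (n : ℝ) ^ (p - 1) := by
    intro n hn
    rw [Finset.mem_Icc] at hn
    have hn0 : (0:ℝ) < (n:ℝ) := by exact_mod_cast hn.1
    have hlb := sum_rpow_ge p hp n
    have hS : (0:ℝ) < ∑ m ∈ Icc 1 n, (m : ℝ) ^ p := by
      have : (0:ℝ) < (n:ℝ) ^ (p+1) / (p+1) :=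
        div_pos (Real.rpow_pos_of_pos hn0 _) hp1
      linarith
    rw [div_le_iff₀ hS]
    have hca : (p+1) * ((n:ℝ)^(p+1)/(p+1)) = (n:ℝ)^(p+1) := by field_simp
    calc (n:ℝ) ^ (2*p) = ((p+1) * (n:ℝ)^(p-1)) * ((n:ℝ)^(p+1)/(p+1)) := by
          rw [mul_comm (p+1) ((n:ℝ)^(p-1)), mul_assoc, hca, ← Real.rpow_add hn0]
          ring_nf
      _ ≤ ((p+1) * (n:ℝ)^(p-1)) * (∑ m ∈ Icc 1 n, (m : ℝ) ^ p) := by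
          apply mul_le_mul_of_nonneg_left hlb
          positivity
  have h2 : ∑ n ∈ Icc 1 N, (n : ℝ) ^ (2 * p) / (∑ m ∈ Icc 1 n, (m : ℝ) ^ p)
      ≤ ∑ n ∈ Icc 1 N, (p + 1) * (n : ℝ) ^ (p - 1) := Finset.sum_le_sum hterm
  -- Step 2: p * ∑ n^(p-1) ≤ (N+1)^p
  have h3 : p * ∑ n ∈ Icc 1 N, (n : ℝ) ^ (p - 1) ≤ ((N:ℝ) + 1) ^ p := by
    rw [Finset.mul_sum]
    rcases le_or_gt 1 p with hpge | hplt
    · -- p ≥ 1 : p n^{p-1} ≤ (n+1)^p - n^p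
      calc ∑ n ∈ Icc 1 N, p * (n:ℝ)^(p-1)
          ≤ ∑ n ∈ Icc 1 N, (((n+1:ℕ):ℝ)^p - ((n:ℕ):ℝ)^p) := by
            apply Finset.sum_le_sum
            intro n hn
            rw [Finset.mem_Icc] at hn
            have := rpow_add_le p hpge n hn.1
            push_cast
            linarith
        _ = ((N+1:ℕ):ℝ)^p - ((0+1:ℕ):ℝ)^p := by
            rw [← Finset.Ico_add_one_right_eq_Icc, Finset.sum_Ico_eq_sum_range]
            simp only [Nat.add_sub_cancel]
            have := Finset.sum_range_sub (fun k => ((k+1 : ℕ):ℝ) ^ p) N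
            rw [← this]
            apply Finset.sum_congr rfl
            intro i _
            rw [add_comm 1 i]
        _ ≤ ((N:ℝ)+1)^p := by
            have h1 : ((0+1:ℕ):ℝ)^p = 1 := by norm_num
            rw [h1]
            push_cast
            linarith [Real.rpow_nonneg (by positivity : (0:ℝ) ≤ (N:ℝ)+1) p]
    · -- p < 1 : p n^{p-1} ≤ n^p - (n-1)^p
      calc ∑ n ∈ Icc 1 N, p * (n:ℝ)^(p-1)
          ≤ ∑ n ∈ Icc 1 N, (((n:ℕ):ℝ)^p - ((n-1:ℕ):ℝ)^p) := by
            apply Finset.sum_le_sum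
            intro n hn
            rw [Finset.mem_Icc] at hn
            have := mul_rpow_le_sub p hp hplt.le n hn.1
            linarith
        _ = ((N:ℕ):ℝ)^p - ((0:ℕ):ℝ)^p := by
            rw [← Finset.Ico_add_one_right_eq_Icc, Finset.sum_Ico_eq_sum_range]
            simp only [Nat.add_sub_cancel]
            have := Finset.sum_range_sub (fun k => ((k : ℕ):ℝ) ^ p) N
            rw [← this]
            apply Finset.sum_congr rfl
            intro i _
            rw [add_comm 1 i]
            simp
        _ ≤ ((N:ℝ)+1)^p := by
            have h0 : ((0:ℕ):ℝ)^p = 0 := by simp [Real.zero_rpow hp.ne']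
            rw [h0, sub_zero]
            exact Real.rpow_le_rpow (by positivity) (by linarith) hp.le
  calc ∑ n ∈ Icc 1 N, (n : ℝ) ^ (2 * p) / (∑ m ∈ Icc 1 n, (m : ℝ) ^ p)
      ≤ ∑ n ∈ Icc 1 N, (p + 1) * (n : ℝ) ^ (p - 1) := h2
    _ = (p+1) * ∑ n ∈ Icc 1 N, (n : ℝ) ^ (p - 1) := by rw [Finset.mul_sum]
    _ ≤ ((p + 1) / p) * ((N : ℝ) + 1) ^ p := by
        rw [div_mul_eq_mul_div, le_div_iff₀ hp]
        calc (p+1) * (∑ n ∈ Icc 1 N, (n:ℝ)^(p-1)) * p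
            = (p+1) * (p * ∑ n ∈ Icc 1 N, (n:ℝ)^(p-1)) := by ring
          _ ≤ (p+1) * ((N:ℝ)+1)^p := mul_le_mul_of_nonneg_left h3 hp1.le
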